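/- Let X be an L-shape maximally embedded in a unit square S, with legs of lengths x and l(x) where x > 1 (and x ≤ √2). Then l(x) < 1, the endpoint of X on the longer leg is a vertex of S, the other endpoint and the corner of X lie on the two sides of S not containing that vertex, and l(x) = x - x·√(x² - 1). -/

import Mathlib

open Set Metric

noncomputable section

abbrev E2 := EuclideanSpace ℝ (Fin 2)

def unitSq : Set E2 := {p | p 0 ∈ Set.Icc (0:ℝ) 1 ∧ p 1 ∈ Set.Icc (0:ℝ) 1}

def IsUnitSquare (S : Set E2) : Prop := ∃ f : E2 ≃ᵢ E2, S = f '' unitSq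

/-- The vertices of the standard unit square. -/
def sqVerts : Set E2 :=
  {WithLp.toLp 2 (![0, 0] : Fin 2 → ℝ), WithLp.toLp 2 (![1, 0] : Fin 2 → ℝ), WithLp.toLp 2 (![1, 1] : Fin 2 → ℝ), WithLp.toLp 2 (![0, 1] : Fin 2 → ℝ)}

/-- The four sides of the standard unit square. -/
def sqSides : Set (Set E2) :=
  { {p | p 1 = 0 ∧ p 0 ∈ Set.Icc (0:ℝ) 1}, {p | p 0 = 1 ∧ p 1 ∈ Set.Icc (0:ℝ) 1},
    {p | p 1 = 1 ∧ p 0 ∈ Set.Icc (0:ℝ) 1}, {p | p 0 = 0 ∧ p 1 ∈ Set.Icc (0:ℝ) 1} }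

/-- `lmax x` is the largest `y` such that an L-shape with legs of lengths `x` and `y`
(two orthogonal segments sharing an endpoint) fits in some unit square. -/
def lmax (x : ℝ) : ℝ :=
  sSup {y | 0 ≤ y ∧ ∃ (S : Set E2) (c p q : E2), IsUnitSquare S ∧
    dist c p = x ∧ dist c q = y ∧ inner ℝ (p - c) (q - c) = (0:ℝ) ∧
    segment ℝ c p ∪ segment ℝ c q ⊆ S}

/-! ### Auxiliary lemmas -/

lemma sq_inj' {a b : ℝ} (ha : 0 ≤ a) (hb : 0 ≤ b) (h : a^2 = b^2) : a = b := by
  rcases mul_eq_zero.mp (show (a-b)*(a+b) = 0 by linear_combination h) with h'|h'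
  · linarith
  · linarith

lemma inner_eq_dist' (a b c : E2) :
    (inner ℝ (b - a) (c - a) : ℝ) = (dist a b ^ 2 + dist a c ^ 2 - dist b c ^ 2) / 2 := by
  have h : b - c = (b - a) - (c - a) := by abel
  have h2 : ‖(b - a) - (c - a)‖ ^ 2
      = ‖b - a‖ ^ 2 - 2 * inner ℝ (b - a) (c - a) + ‖c - a‖ ^ 2 := by
    rw [← real_inner_self_eq_norm_sq, ← real_inner_self_eq_norm_sq, ← real_inner_self_eq_norm_sq]
    rw [inner_sub_sub_self]
    rw [real_inner_comm (c-a) (b-a)]; ring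
  rw [dist_eq_norm, dist_eq_norm, dist_eq_norm, norm_sub_rev a b, norm_sub_rev a c, h]
  linarith

lemma alg' (x y A B : ℝ) (hx1 : 1 < x) (hy : 0 ≤ y)
    (hA : 0 ≤ A) (hB0 : 0 ≤ B) (hB1 : B ≤ 1)
    (hAB : A^2 + B^2 = x^2) (hcon : x*A + y*B ≤ x) :
    y ≤ x - x*Real.sqrt (x^2-1) ∧
    (y = x - x*Real.sqrt (x^2-1) → B = 1 ∧ A = Real.sqrt (x^2-1) ∧ x*A + y*B = x) := by
  set s := Real.sqrt (x^2-1) with hs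
  have hx0 : (0:ℝ) < x := by linarith
  have hs0 : 0 < s := Real.sqrt_pos.mpr (by nlinarith)
  have hss : s^2 = x^2 - 1 := Real.sq_sqrt (by nlinarith)
  have hBpos : 0 < B := by
    rcases lt_or_eq_of_le hB0 with h | h
    · exact h
    · exfalso
      have hAx : A = x := sq_inj' hA hx0.le (by nlinarith)
      nlinarith
  have hnn : 0 ≤ x^2*((1-B)*((2-2*s+s^2)*B + s^2)) := by
    have h1 : 0 ≤ (2-2*s+s^2)*B + s^2 := by nlinarith [sq_nonneg (1-s)]
    have h2 : 0 ≤ 1 - B := by linarith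
    positivity
  have hident : (x*A)^2 = (x - (x - x*s)*B)^2 + x^2*((1-B)*((2-2*s+s^2)*B + s^2)) := by
    linear_combination x^2*hAB + x^2*hss - x^2*B^2*hss + (x^2*B^2 - 2*x^2)*hss
  have hkey : x - (x - x*s)*B ≤ x*A := by
    rcases le_or_gt (x - (x - x*s)*B) 0 with h | h
    · nlinarith [mul_nonneg hx0.le hA]
    · nlinarith [mul_nonneg hx0.le hA]
  have hyB : y*B ≤ (x - x*s)*B := by linarith
  have goal1 : y ≤ x - x*s := le_of_mul_le_mul_right (by linarith [hyB]) hBpos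
  refine ⟨goal1, fun heq => ?_⟩
  have hEq : x*A = x - y*B := by rw [← heq] at hkey; linarith
  have hzero : (1-B)*((2-2*s+s^2)*B + s^2) = 0 := by
    have h6 : (x*A)^2 = (x - y*B)^2 := by rw [hEq]
    have h2 : x^2*((1-B)*((2-2*s+s^2)*B + s^2)) = 0 := by
      rw [heq] at h6; linarith [hident, h6]
    have hx2 : x^2 ≠ 0 := by positivity
    exact (mul_eq_zero.mp h2).resolve_left hx2
  have hB : B = 1 := by
    rcases mul_eq_zero.mp hzero with h | h
    · linarith
    · nlinarith [sq_nonneg (1-s)]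
  have hAs : A = s := sq_inj' hA hs0.le (by nlinarith)
  refine ⟨hB, hAs, by rw [hB, hAs, heq]; ring⟩

lemma spread' {t u v : ℝ} (ht : t ∈ Set.Icc (0:ℝ) 1) (hu : t+u ∈ Set.Icc (0:ℝ) 1)
    (hv : t+v ∈ Set.Icc (0:ℝ) 1) (h : u*v ≤ 0) : |u| + |v| ≤ 1 := by
  obtain ⟨ht0, ht1⟩ := ht
  obtain ⟨hu0, hu1⟩ := hu
  obtain ⟨hv0, hv1⟩ := hv
  rcases abs_cases u with ⟨h1,h2⟩|⟨h1,h2⟩ <;> rcases abs_cases v with ⟨h3,h4⟩|⟨h3,h4⟩ <;>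
    rw [h1, h3] <;> nlinarith [mul_nonneg (by linarith : (0:ℝ) ≤ 1 - t - u)
      (by linarith : (0:ℝ) ≤ 1 - t - v),
      mul_nonneg (by linarith : (0:ℝ) ≤ t + u) (by linarith : (0:ℝ) ≤ t + v)]

lemma half' (x y : ℝ) (hx1 : 1 < x) (hy : 0 ≤ y)
    (c0 c1 d0 d1 e0 e1 : ℝ)
    (hc0 : c0 ∈ Set.Icc (0:ℝ) 1) (hc1 : c1 ∈ Set.Icc (0:ℝ) 1)
    (hp0 : c0 + d0 ∈ Set.Icc (0:ℝ) 1) (hp1 : c1 + d1 ∈ Set.Icc (0:ℝ) 1)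
    (hq0 : c0 + e0 ∈ Set.Icc (0:ℝ) 1) (hq1 : c1 + e1 ∈ Set.Icc (0:ℝ) 1)
    (hd2 : d0^2 + d1^2 = x^2) (he2 : e0^2 + e1^2 = y^2)
    (ho : d0*e0 + d1*e1 = 0)
    (hDsign : 0 ≤ (d0*e1 - d1*e0)*(d0*d1)) :
    y ≤ x - x*Real.sqrt (x^2-1) ∧
    (y = x - x*Real.sqrt (x^2-1) →
      (c1 + d1 = 1 ∧ c1 = 0 ∨ c1 + d1 = 0 ∧ c1 = 1) ∧
      (c0 + d0 = 1 ∧ c0 + e0 = 0 ∨ c0 + d0 = 0 ∧ c0 + e0 = 1)) := by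
  have hx0 : (0:ℝ) < x := by linarith
  have hs0 : 0 < Real.sqrt (x^2-1) := Real.sqrt_pos.mpr (by nlinarith)
  have hxe0 : x^2*e0 = -(d0*e1 - d1*e0)*d1 := by linear_combination (-e0)*hd2 + d0*ho
  have h1 : x^2*(d0*e0) = -((d0*e1 - d1*e0)*(d0*d1)) := by linear_combination d0*hxe0
  have hd0e0 : d0*e0 ≤ 0 := by
    by_contra h
    push_neg at h
    nlinarith [mul_pos (pow_pos hx0 2) h]
  have hB1 : |d1| ≤ 1 := abs_le.mpr ⟨by linarith [hc1.2, hp1.1], by linarith [hc1.1, hp1.2]⟩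
  have hsp : |d0| + |e0| ≤ 1 := spread' hc0 hp0 hq0 hd0e0
  have hD2 : (d0*e1 - d1*e0)^2 = (x*y)^2 := by
    linear_combination (e0^2+e1^2)*hd2 + x^2*he2 + (-(d0*e0) - d1*e1)*ho
  have habsD : |d0*e1 - d1*e0| = x*y :=
    sq_inj' (abs_nonneg _) (by positivity) (by rw [sq_abs]; exact hD2)
  have hxe0abs : x*|e0| = y*|d1| := by
    have h2 : |x^2*e0| = |(d0*e1 - d1*e0)*d1| := by rw [hxe0, neg_mul, abs_neg]
    rw [abs_mul, abs_mul, habsD, abs_pow, abs_of_pos hx0] at h2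
    have h3 : x*(x*|e0|) = x*(y*|d1|) := by rw [← mul_assoc, ← pow_two]; rw [h2]; ring
    exact mul_left_cancel₀ hx0.ne' h3
  have hcon : x*|d0| + y*|d1| ≤ x := by
    have h4 := mul_le_mul_of_nonneg_left hsp hx0.le
    rw [mul_add] at h4
    linarith [hxe0abs]
  have hAB : |d0|^2 + |d1|^2 = x^2 := by rw [sq_abs, sq_abs]; exact hd2
  obtain ⟨g1, g2⟩ := alg' x y |d0| |d1| hx1 hy (abs_nonneg _) (abs_nonneg _) hB1 hAB hcon
  refine ⟨g1, fun heq => ?_⟩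
  obtain ⟨hB, hA, hE⟩ := g2 heq
  have hsum : |d0| + |e0| = 1 := by
    have h5 : x*(|d0| + |e0|) = x*1 := by rw [mul_add]; linarith [hxe0abs, hE]
    exact mul_left_cancel₀ hx0.ne' h5
  constructor
  · rcases (abs_eq (by norm_num : (0:ℝ) ≤ 1)).mp hB with h|h
    · left; constructor <;> linarith [hc1.1, hp1.2]
    · right; constructor <;> linarith [hc1.2, hp1.1]
  · rcases lt_trichotomy d0 0 with hlt|h0|hgt
    · right
      have he0 : 0 ≤ e0 := by nlinarith
      rw [abs_of_neg hlt, abs_of_nonneg he0] at hsum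
      constructor <;> linarith [hp0.1, hq0.2]
    · exfalso; rw [h0, abs_zero] at hA; linarith
    · left
      have he0 : e0 ≤ 0 := by nlinarith
      rw [abs_of_pos hgt, abs_of_nonpos he0] at hsum
      constructor <;> linarith [hp0.2, hq0.1]

lemma core' (x y : ℝ) (hx1 : 1 < x) (hy : 0 ≤ y) (c p q : E2)
    (hc : c ∈ unitSq) (hp : p ∈ unitSq) (hq : q ∈ unitSq)
    (hd : dist c p = x) (he : dist c q = y)
    (horth : inner ℝ (p - c) (q - c) = (0:ℝ)) :
    y ≤ x - x*Real.sqrt (x^2-1) ∧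
    (y = x - x*Real.sqrt (x^2-1) →
      (((p 1 = 1 ∧ c 1 = 0 ∨ p 1 = 0 ∧ c 1 = 1) ∧ (p 0 = 1 ∧ q 0 = 0 ∨ p 0 = 0 ∧ q 0 = 1)) ∨
       ((p 0 = 1 ∧ c 0 = 0 ∨ p 0 = 0 ∧ c 0 = 1) ∧ (p 1 = 1 ∧ q 1 = 0 ∨ p 1 = 0 ∧ q 1 = 1)))) := by
  set d0 := p 0 - c 0 with hd0def
  set d1 := p 1 - c 1 with hd1def
  set e0 := q 0 - c 0 with he0def
  set e1 := q 1 - c 1 with he1def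
  have hdx : Real.sqrt ((c 0 - p 0)^2 + (c 1 - p 1)^2) = x := by
    rw [← hd, EuclideanSpace.dist_eq, Fin.sum_univ_two]
    simp [Real.dist_eq, sq_abs]
  have hd2 : d0^2 + d1^2 = x^2 := by
    have h := Real.sq_sqrt (show (0:ℝ) ≤ (c 0 - p 0)^2 + (c 1 - p 1)^2 by positivity)
    rw [hdx] at h
    rw [hd0def, hd1def]; linear_combination -h
  have hex : Real.sqrt ((c 0 - q 0)^2 + (c 1 - q 1)^2) = y := by
    rw [← he, EuclideanSpace.dist_eq, Fin.sum_univ_two]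
    simp [Real.dist_eq, sq_abs]
  have he2 : e0^2 + e1^2 = y^2 := by
    have h := Real.sq_sqrt (show (0:ℝ) ≤ (c 0 - q 0)^2 + (c 1 - q 1)^2 by positivity)
    rw [hex] at h
    rw [he0def, he1def]; linear_combination -h
  have ho : d0*e0 + d1*e1 = 0 := by
    have h := horth
    simp only [PiLp.inner_apply, RCLike.inner_apply, conj_trivial, Fin.sum_univ_two,
      PiLp.sub_apply] at h
    rw [hd0def, hd1def, he0def, he1def]; linear_combination h
  have hp0 : c 0 + d0 ∈ Set.Icc (0:ℝ) 1 := by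
    rw [show c 0 + d0 = p 0 from by rw [hd0def]; ring]; exact hp.1
  have hp1 : c 1 + d1 ∈ Set.Icc (0:ℝ) 1 := by
    rw [show c 1 + d1 = p 1 from by rw [hd1def]; ring]; exact hp.2
  have hq0 : c 0 + e0 ∈ Set.Icc (0:ℝ) 1 := by
    rw [show c 0 + e0 = q 0 from by rw [he0def]; ring]; exact hq.1
  have hq1 : c 1 + e1 ∈ Set.Icc (0:ℝ) 1 := by
    rw [show c 1 + e1 = q 1 from by rw [he1def]; ring]; exact hq.2
  have hfix : ∀ a b : ℝ, a + (b - a) = b := fun a b => by ring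
  rcases le_total 0 ((d0*e1 - d1*e0)*(d0*d1)) with hsg|hsg
  · obtain ⟨g1, g2⟩ := half' x y hx1 hy (c 0) (c 1) d0 d1 e0 e1 hc.1 hc.2 hp0 hp1 hq0 hq1
      hd2 he2 ho hsg
    refine ⟨g1, fun heq => Or.inl ?_⟩
    have h := g2 heq
    simp only [hd0def, hd1def, he0def, he1def, hfix] at h
    exact h
  · obtain ⟨g1, g2⟩ := half' x y hx1 hy (c 1) (c 0) d1 d0 e1 e0 hc.2 hc.1 hp1 hp0 hq1 hq0
      (by linear_combination hd2) (by linear_combination he2) (by linear_combination ho)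
      (by rw [show (d1*e0 - d0*e1)*(d1*d0) = -((d0*e1 - d1*e0)*(d0*d1)) from by ring]; linarith)
    refine ⟨g1, fun heq => Or.inr ?_⟩
    have h := g2 heq
    simp only [hd0def, hd1def, he0def, he1def, hfix] at h
    exact h

lemma vmem' (a b : ℝ) (p : E2) (h0 : p 0 = a) (h1 : p 1 = b)
    (h : WithLp.toLp 2 (![a,b] : Fin 2 → ℝ) ∈ sqVerts) : p ∈ sqVerts := by
  have hp : p = WithLp.toLp 2 (![a,b] : Fin 2 → ℝ) := by
    ext k; fin_cases k <;> simp [h0, h1]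
  rwa [hp]

lemma sides_ne' (a b : ℝ) (ha : a = 0 ∨ a = 1) :
    {p : E2 | p 1 = a ∧ p 0 ∈ Set.Icc (0:ℝ) 1} ≠ {p : E2 | p 0 = b ∧ p 1 ∈ Set.Icc (0:ℝ) 1} := by
  intro h
  have hw : WithLp.toLp 2 (![b, 1-a] : Fin 2 → ℝ) ∈ {p : E2 | p 0 = b ∧ p 1 ∈ Set.Icc (0:ℝ) 1} := by
    refine ⟨by simp, ?_⟩
    rcases ha with h'|h' <;> norm_num [h']
  rw [← h] at hw
  have h2 : (1:ℝ) - a = a := by simpa using hw.1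
  rcases ha with h'|h' <;> (rw [h'] at h2; norm_num at h2)

lemma unitSq_convex : Convex ℝ unitSq := by
  intro u hu v hv a b ha hb hab
  have e0 : (a • u + b • v) 0 = a * u 0 + b * v 0 := by simp
  have e1 : (a • u + b • v) 1 = a * u 1 + b * v 1 := by simp
  refine ⟨⟨?_, ?_⟩, ⟨?_, ?_⟩⟩ <;> first | (rw [e0]; skip) | rw [e1]
  · nlinarith [hu.1.1, hv.1.1]
  · nlinarith [hu.1.2, hv.1.2]
  · nlinarith [hu.2.1, hv.2.1]
  · nlinarith [hu.2.2, hv.2.2]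

lemma rigid' (c p q : E2) (hc : c ∈ unitSq) (hq : q ∈ unitSq)
    (hbig : ((p 1 = 1 ∧ c 1 = 0 ∨ p 1 = 0 ∧ c 1 = 1) ∧
             (p 0 = 1 ∧ q 0 = 0 ∨ p 0 = 0 ∧ q 0 = 1)) ∨
            ((p 0 = 1 ∧ c 0 = 0 ∨ p 0 = 0 ∧ c 0 = 1) ∧
             (p 1 = 1 ∧ q 1 = 0 ∨ p 1 = 0 ∧ q 1 = 1))) :
    p ∈ sqVerts ∧ ∃ E₁ ∈ sqSides, ∃ E₂ ∈ sqSides, E₁ ≠ E₂ ∧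
      p ∉ E₁ ∧ p ∉ E₂ ∧ q ∈ E₁ ∧ c ∈ E₂ := by
  have m0 : {p : E2 | p 1 = 0 ∧ p 0 ∈ Set.Icc (0:ℝ) 1} ∈ sqSides := by
    unfold sqSides; left; rfl
  have m1 : {p : E2 | p 0 = 1 ∧ p 1 ∈ Set.Icc (0:ℝ) 1} ∈ sqSides := by
    unfold sqSides; right; left; rfl
  have m2 : {p : E2 | p 1 = 1 ∧ p 0 ∈ Set.Icc (0:ℝ) 1} ∈ sqSides := by
    unfold sqSides; right; right; left; rfl
  have m3 : {p : E2 | p 0 = 0 ∧ p 1 ∈ Set.Icc (0:ℝ) 1} ∈ sqSides := by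
    unfold sqSides; right; right; right; rfl
  rcases hbig with ⟨hj, hi⟩ | ⟨hj, hi⟩
  · -- q is pinned in coordinate 0 (vertical side E₁), c in coordinate 1 (horizontal E₂)
    rcases hj with ⟨hp1, hc1⟩ | ⟨hp1, hc1⟩ <;> rcases hi with ⟨hp0, hq0⟩ | ⟨hp0, hq0⟩
    · exact ⟨vmem' 1 1 p hp0 hp1 (by simp [sqVerts]), _, m3, _, m0,
        (sides_ne' 0 0 (Or.inl rfl)).symm,
        fun h => absurd h.1 (by rw [hp0]; norm_num),
        fun h => absurd h.1 (by rw [hp1]; norm_num),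
        ⟨hq0, hq.2⟩, ⟨hc1, hc.1⟩⟩
    · exact ⟨vmem' 0 1 p hp0 hp1 (by simp [sqVerts]), _, m1, _, m0,
        (sides_ne' 0 1 (Or.inl rfl)).symm,
        fun h => absurd h.1 (by rw [hp0]; norm_num),
        fun h => absurd h.1 (by rw [hp1]; norm_num),
        ⟨hq0, hq.2⟩, ⟨hc1, hc.1⟩⟩
    · exact ⟨vmem' 1 0 p hp0 hp1 (by simp [sqVerts]), _, m3, _, m2,
        (sides_ne' 1 0 (Or.inr rfl)).symm,
        fun h => absurd h.1 (by rw [hp0]; norm_num),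
        fun h => absurd h.1 (by rw [hp1]; norm_num),
        ⟨hq0, hq.2⟩, ⟨hc1, hc.1⟩⟩
    · exact ⟨vmem' 0 0 p hp0 hp1 (by simp [sqVerts]), _, m1, _, m2,
        (sides_ne' 1 1 (Or.inr rfl)).symm,
        fun h => absurd h.1 (by rw [hp0]; norm_num),
        fun h => absurd h.1 (by rw [hp1]; norm_num),
        ⟨hq0, hq.2⟩, ⟨hc1, hc.1⟩⟩
  · -- q pinned in coordinate 1 (horizontal E₁), c in coordinate 0 (vertical E₂)
    rcases hj with ⟨hp0, hc0⟩ | ⟨hp0, hc0⟩ <;> rcases hi with ⟨hp1, hq1⟩ | ⟨hp1, hq1⟩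
    · exact ⟨vmem' 1 1 p hp0 hp1 (by simp [sqVerts]), _, m0, _, m3,
        sides_ne' 0 0 (Or.inl rfl),
        fun h => absurd h.1 (by rw [hp1]; norm_num),
        fun h => absurd h.1 (by rw [hp0]; norm_num),
        ⟨hq1, hq.1⟩, ⟨hc0, hc.2⟩⟩
    · exact ⟨vmem' 1 0 p hp0 hp1 (by simp [sqVerts]), _, m2, _, m3,
        sides_ne' 1 0 (Or.inr rfl),
        fun h => absurd h.1 (by rw [hp1]; norm_num),
        fun h => absurd h.1 (by rw [hp0]; norm_num),
        ⟨hq1, hq.1⟩, ⟨hc0, hc.2⟩⟩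
    · exact ⟨vmem' 0 1 p hp0 hp1 (by simp [sqVerts]), _, m0, _, m1,
        sides_ne' 0 1 (Or.inl rfl),
        fun h => absurd h.1 (by rw [hp1]; norm_num),
        fun h => absurd h.1 (by rw [hp0]; norm_num),
        ⟨hq1, hq.1⟩, ⟨hc0, hc.2⟩⟩
    · exact ⟨vmem' 0 0 p hp0 hp1 (by simp [sqVerts]), _, m2, _, m1,
        sides_ne' 1 1 (Or.inr rfl),
        fun h => absurd h.1 (by rw [hp1]; norm_num),
        fun h => absurd h.1 (by rw [hp0]; norm_num),
        ⟨hq1, hq.1⟩, ⟨hc0, hc.2⟩⟩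

lemma lmax_eq' (x : ℝ) (hx1 : 1 < x) (hx2 : x ≤ Real.sqrt 2) :
    lmax x = x - x*Real.sqrt (x^2-1) := by
  set s := Real.sqrt (x^2-1) with hsdef
  have hx0 : (0:ℝ) < x := by linarith
  have hs0 : 0 < s := Real.sqrt_pos.mpr (by nlinarith)
  have hss : s^2 = x^2 - 1 := Real.sq_sqrt (by nlinarith)
  have hx2' : x^2 ≤ 2 := by
    nlinarith [Real.sq_sqrt (show (0:ℝ) ≤ 2 by norm_num), Real.sqrt_nonneg 2]
  have hs1 : s ≤ 1 := by nlinarith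
  have hy0 : 0 ≤ x - x*s := by nlinarith
  -- the construction showing y₀ is attained
  have hmem : (x - x*s) ∈ {y | 0 ≤ y ∧ ∃ (S : Set E2) (c p q : E2), IsUnitSquare S ∧
      dist c p = x ∧ dist c q = y ∧ inner ℝ (p - c) (q - c) = (0:ℝ) ∧
      segment ℝ c p ∪ segment ℝ c q ⊆ S} := by
    refine ⟨hy0, unitSq, (WithLp.toLp 2 (![1, s] : Fin 2 → ℝ) : E2), (WithLp.toLp 2 (![0, 0] : Fin 2 → ℝ) : E2),
      (WithLp.toLp 2 (![1 - (1-s)*s, 1] : Fin 2 → ℝ) : E2), ⟨IsometryEquiv.refl E2, by rw [show ⇑(IsometryEquiv.refl E2) = id from rfl, Set.image_id]⟩, ?_, ?_, ?_, ?_⟩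
    · rw [EuclideanSpace.dist_eq, Fin.sum_univ_two]
      simp only [Real.dist_eq]
      rw [show |(WithLp.toLp 2 (![1, s] : Fin 2 → ℝ) : E2) 0 - (WithLp.toLp 2 (![0,0] : Fin 2 → ℝ) : E2) 0|^2
          + |(WithLp.toLp 2 (![1, s] : Fin 2 → ℝ) : E2) 1 - (WithLp.toLp 2 (![0,0] : Fin 2 → ℝ) : E2) 1|^2 = 1 + s^2 from by
        simp [sq_abs]]
      rw [show (1:ℝ) + s^2 = x^2 by linarith, Real.sqrt_sq hx0.le]
    · rw [EuclideanSpace.dist_eq, Fin.sum_univ_two]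
      simp only [Real.dist_eq]
      rw [show |(WithLp.toLp 2 (![1, s] : Fin 2 → ℝ) : E2) 0 - (WithLp.toLp 2 (![1 - (1-s)*s, 1] : Fin 2 → ℝ) : E2) 0|^2
          + |(WithLp.toLp 2 (![1, s] : Fin 2 → ℝ) : E2) 1 - (WithLp.toLp 2 (![1 - (1-s)*s, 1] : Fin 2 → ℝ) : E2) 1|^2
          = ((1-s)*x)^2 from by
        simp only [sq_abs]; simp; linear_combination (s^2 - 2*s + 1)*hss]
      rw [Real.sqrt_sq (by nlinarith)]; ring
    · simp only [PiLp.inner_apply, RCLike.inner_apply, conj_trivial, Fin.sum_univ_two,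
        PiLp.sub_apply]
      simp
    · have hcs : (WithLp.toLp 2 (![1, s] : Fin 2 → ℝ) : E2) ∈ unitSq := by
        constructor <;> simp <;> constructor <;> nlinarith
      have hps : (WithLp.toLp 2 (![0, 0] : Fin 2 → ℝ) : E2) ∈ unitSq := by
        constructor <;> simp
      have hqs : (WithLp.toLp 2 (![1 - (1-s)*s, 1] : Fin 2 → ℝ) : E2) ∈ unitSq := by
        constructor <;> simp <;> constructor <;> nlinarith
      exact union_subset (unitSq_convex.segment_subset hcs hps)
        (unitSq_convex.segment_subset hcs hqs)
  have hbound : ∀ y ∈ {y | 0 ≤ y ∧ ∃ (S : Set E2) (c p q : E2), IsUnitSquare S ∧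
      dist c p = x ∧ dist c q = y ∧ inner ℝ (p - c) (q - c) = (0:ℝ) ∧
      segment ℝ c p ∪ segment ℝ c q ⊆ S}, y ≤ x - x*s := by
    rintro y ⟨hy, S, c, p, q, ⟨f, rfl⟩, hdp, hdq, ho, hsub⟩
    obtain ⟨c', hc', rfl⟩ := hsub (Or.inl (left_mem_segment ℝ c p))
    obtain ⟨p', hp', rfl⟩ := hsub (Or.inl (right_mem_segment ℝ (f c') p))
    obtain ⟨q', hq', rfl⟩ := hsub (Or.inr (right_mem_segment ℝ (f c') q))
    rw [f.dist_eq] at hdp hdq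
    have h1 := inner_eq_dist' (f c') (f p') (f q')
    rw [f.dist_eq, f.dist_eq, f.dist_eq] at h1
    have ho' : inner ℝ (p' - c') (q' - c') = (0:ℝ) := by
      rw [inner_eq_dist', ← h1]; exact ho
    exact (core' x y hx1 hy c' p' q' hc' hp' hq' hdp hdq ho').1
  refine le_antisymm (csSup_le ⟨_, hmem⟩ hbound) (le_csSup ⟨_, hbound⟩ hmem)

theorem maximally_embedded_Lshape
    (x : ℝ) (hx1 : 1 < x) (hx2 : x ≤ Real.sqrt 2)
    (S : Set E2) (c p q : E2) (hS : IsUnitSquare S)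
    (hlegp : dist c p = x) (hlegq : dist c q = lmax x)
    (horth : inner ℝ (p - c) (q - c) = (0:ℝ))
    (hsub : segment ℝ c p ∪ segment ℝ c q ⊆ S) :
    lmax x < 1 ∧
    lmax x = x - x * Real.sqrt (x ^ 2 - 1) ∧
    ∀ f : E2 ≃ᵢ E2, S = f '' unitSq →
      p ∈ f '' sqVerts ∧
      ∃ E₁ ∈ sqSides, ∃ E₂ ∈ sqSides, f '' E₁ ≠ f '' E₂ ∧
        p ∉ f '' E₁ ∧ p ∉ f '' E₂ ∧ q ∈ f '' E₁ ∧ c ∈ f '' E₂ := by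
  have hx0 : (0:ℝ) < x := by linarith
  have hs0 : 0 < Real.sqrt (x^2-1) := Real.sqrt_pos.mpr (by nlinarith)
  have hss : Real.sqrt (x^2-1)^2 = x^2 - 1 := Real.sq_sqrt (by nlinarith)
  have hx2' : x^2 ≤ 2 := by
    nlinarith [Real.sq_sqrt (show (0:ℝ) ≤ 2 by norm_num), Real.sqrt_nonneg 2]
  have hs1 : Real.sqrt (x^2-1) ≤ 1 := by nlinarith
  have hlm : lmax x = x - x*Real.sqrt (x^2-1) := lmax_eq' x hx1 hx2
  have hy0 : 0 ≤ lmax x := by rw [hlm]; nlinarith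
  refine ⟨by rw [hlm]; nlinarith, by rw [hlm], ?_⟩
  intro f hf
  rw [hf] at hsub
  obtain ⟨c', hc', rfl⟩ := hsub (Or.inl (left_mem_segment ℝ c p))
  obtain ⟨p', hp', rfl⟩ := hsub (Or.inl (right_mem_segment ℝ (f c') p))
  obtain ⟨q', hq', rfl⟩ := hsub (Or.inr (right_mem_segment ℝ (f c') q))
  rw [f.dist_eq] at hlegp hlegq
  have h1 := inner_eq_dist' (f c') (f p') (f q')
  rw [f.dist_eq, f.dist_eq, f.dist_eq] at h1
  have ho' : inner ℝ (p' - c') (q' - c') = (0:ℝ) := by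
    rw [inner_eq_dist', ← h1]; exact horth
  have hcore := (core' x (lmax x) hx1 hy0 c' p' q' hc' hp' hq' hlegp hlegq ho').2 hlm
  obtain ⟨hv, E₁, hE₁, E₂, hE₂, hne, hpn1, hpn2, hqm, hcm⟩ := rigid' c' p' q' hc' hq' hcore
  refine ⟨⟨p', hv, rfl⟩, E₁, hE₁, E₂, hE₂,
    fun h => hne (Set.image_injective.mpr f.injective h), ?_, ?_,
    ⟨q', hqm, rfl⟩, ⟨c', hcm, rfl⟩⟩
  · rintro ⟨z, hz, hzeq⟩
    rw [f.injective hzeq] at hz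
    exact hpn1 hz
  · rintro ⟨z, hz, hzeq⟩
    rw [f.injective hzeq] at hz
    exact hpn2 hz

end
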